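/- Let X be a square-integrable real random variable, R a real number, and b a real number with b < R and P(X < b) > 0. Define Y = |X - b| + b. Then E[(Y - R)²] < E[(X - R)²]. -/

import Mathlib

open MeasureTheory

theorem flooding_mse_lt
    {Ω : Type*} [MeasurableSpace Ω] (μ : Measure Ω) [IsProbabilityMeasure μ]
    (X : Ω → ℝ) (hX : MemLp X 2 μ) (R b : ℝ) (hb : b < R)
    (hpos : 0 < μ {ω | X ω < b}) :
    (∫ ω, ((|X ω - b| + b) - R) ^ 2 ∂μ) < ∫ ω, (X ω - R) ^ 2 ∂μ := by
  have hXb : MemLp (fun ω => X ω - b) 2 μ := hX.sub (memLp_const b)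
  have habs : MemLp (fun ω => |X ω - b|) 2 μ := by
    simpa [Real.norm_eq_abs] using hXb.norm
  have hY : MemLp (fun ω => |X ω - b| + b - R) 2 μ :=
    (habs.add (memLp_const b)).sub (memLp_const R)
  have hf : Integrable (fun ω => (|X ω - b| + b - R) ^ 2) μ := by
    simpa [sq] using hY.integrable_sq
  have hg : Integrable (fun ω => (X ω - R) ^ 2) μ := by
    simpa [sq] using (hX.sub (memLp_const R)).integrable_sq
  have hd : Integrable (fun ω => (X ω - R) ^ 2 - (|X ω - b| + b - R) ^ 2) μ := hg.sub hf
  have hle : ∀ ω, 0 ≤ (X ω - R) ^ 2 - (|X ω - b| + b - R) ^ 2 := by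
    intro ω
    rcases le_or_gt b (X ω) with h | h
    · rw [abs_of_nonneg (by linarith)]; ring_nf; exact le_refl _
    · rw [abs_of_neg (by linarith)]; nlinarith
  have hsub : {ω | X ω < b} ⊆ Function.support
      (fun ω => (X ω - R) ^ 2 - (|X ω - b| + b - R) ^ 2) := by
    intro ω h
    simp only [Set.mem_setOf_eq] at h
    have : 0 < (X ω - R) ^ 2 - (|X ω - b| + b - R) ^ 2 := by
      rw [abs_of_neg (by linarith)]; nlinarith
    exact fun hc => by simp [hc] at this
  have hpos' : 0 < ∫ ω, ((X ω - R) ^ 2 - (|X ω - b| + b - R) ^ 2) ∂μ := by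
    rw [integral_pos_iff_support_of_nonneg (fun ω => hle ω) hd]
    exact lt_of_lt_of_le hpos (measure_mono hsub)
  have := integral_sub hg hf
  linarith [this ▸ hpos']
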